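/- By the Chung–Feller theorem, for each i with 0 ≤ i ≤ n, the number of lattice paths of length 2n from the origin to (2n,0) with steps (1,1) and (1,-1) having exactly i down steps strictly below the x-axis equals the Catalan number Catalan(n), independently of i. -/

import Mathlib

namespace CF

def stepv (b : Bool) : ℤ := if b then 1 else -1

def wsum (l : List Bool) : ℤ := (l.map stepv).sum

def bc : ℤ → List Bool → ℕ
  | _, [] => 0
  | h, b :: t => (if b = false ∧ h + stepv b < 0 then 1 else 0) + bc (h + stepv b) t

@[simp] lemma wsum_nil : wsum [] = 0 := rfl
@[simp] lemma wsum_cons (b : Bool) (l : List Bool) : wsum (b :: l) = stepv b + wsum l := by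
  simp [wsum]
@[simp] lemma wsum_append (p q : List Bool) : wsum (p ++ q) = wsum p + wsum q := by
  simp [wsum]

@[simp] lemma bc_nil (h : ℤ) : bc h [] = 0 := rfl
lemma bc_cons (h : ℤ) (b : Bool) (t : List Bool) :
    bc h (b :: t) = (if b = false ∧ h + stepv b < 0 then 1 else 0) + bc (h + stepv b) t := rfl

lemma bc_append (h : ℤ) (p q : List Bool) :
    bc h (p ++ q) = bc h p + bc (h + wsum p) q := by
  induction p generalizing h with
  | nil => simp
  | cons b t ih => simp [bc_cons, ih, add_assoc]

lemma bc_mono {h h' : ℤ} (hle : h ≤ h') (l : List Bool) : bc h' l ≤ bc h l := by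
  induction l generalizing h h' with
  | nil => simp
  | cons b t ih =>
    simp only [bc_cons]
    have h1 := ih (h := h + stepv b) (h' := h' + stepv b) (by omega)
    have h2 : (if b = false ∧ h' + stepv b < 0 then 1 else 0)
        ≤ (if b = false ∧ h + stepv b < 0 then 1 else 0) := by
      split
      · next hc =>
        obtain ⟨hb, hlt⟩ := hc
        subst hb
        have : h + stepv false < 0 := by omega
        simp [this]
      · omega
    omega

lemma bc_le_count (h : ℤ) (l : List Bool) : bc h l ≤ l.count false := by
  induction l generalizing h with
  | nil => simp
  | cons b t ih =>
    rw [bc_cons, List.count_cons]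
    have h1 := ih (h + stepv b)
    cases b
    · simp only [Bool.false_eq_true, and_false, false_and, if_false]
      split <;> simp <;> omega
    · simpa using h1

lemma wsum_eq_counts (l : List Bool) :
    wsum l = (l.count true : ℤ) - l.count false := by
  induction l with
  | nil => simp
  | cons b t ih => cases b <;> simp [List.count_cons, ih, stepv] <;> ring

lemma count_add_count (l : List Bool) : l.count true + l.count false = l.length := by
  induction l with
  | nil => simp
  | cons b t ih => cases b <;> simp [List.count_cons] <;> omega

/-- for a balanced list of length 2n, count false = n -/
lemma count_false_of_balanced {l : List Bool} {n : ℕ} (hl : l.length = 2 * n)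
    (hw : wsum l = 0) : l.count false = n := by
  have h1 := wsum_eq_counts l
  have h2 := count_add_count l
  rw [hl] at h2
  omega



lemma wsum_take_append (a b : List Bool) (t : ℕ) :
    wsum ((a ++ b).take t) = wsum (a.take t) + wsum (b.take (t - a.length)) := by
  rw [List.take_append, wsum_append]

lemma wsum_take_cons_succ (b : Bool) (l : List Bool) (s : ℕ) :
    wsum ((b :: l).take (s+1)) = stepv b + wsum (l.take s) := by
  simp [List.take_succ_cons]

/-- D+ : if bc h l = 0 then all prefix sums from h stay ≥ 0. -/
lemma nonneg_of_bc_zero : ∀ (l : List Bool) (h : ℤ), 0 ≤ h → bc h l = 0 →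
    ∀ t, 0 ≤ h + wsum (l.take t)
  | [], h, h0, _, t => by simpa using h0
  | b :: r, h, h0, hbc, t => by
    rw [bc_cons] at hbc
    have hif : ¬(b = false ∧ h + stepv b < 0) := by
      intro hc; rw [if_pos hc] at hbc; omega
    have hbc' : bc (h + stepv b) r = 0 := by
      split at hbc <;> omega
    have h1 : 0 ≤ h + stepv b := by
      cases b
      · push_neg at hif
        have := hif rfl
        omega
      · simp [stepv]; omega
    match t with
    | 0 => simpa using h0
    | s + 1 =>
      rw [wsum_take_cons_succ, ← add_assoc]
      exact nonneg_of_bc_zero r (h + stepv b) h1 hbc' s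

/-- converse of D+ : if all prefix sums stay ≥ 0 then bc h l = 0. -/
lemma bc_zero_of_nonneg : ∀ (l : List Bool) (h : ℤ),
    (∀ t, 0 ≤ h + wsum (l.take t)) → bc h l = 0
  | [], h, _ => rfl
  | b :: r, h, hp => by
    have h1 : 0 ≤ h + stepv b := by simpa [wsum_take_cons_succ] using hp 1
    have h2 : ∀ t, 0 ≤ (h + stepv b) + wsum (r.take t) := by
      intro t
      have := hp (t + 1)
      rw [wsum_take_cons_succ] at this
      omega
    rw [bc_cons, bc_zero_of_nonneg r (h + stepv b) h2, if_neg (by omega)]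

/-- E : a path starting at h ≥ 1 and ending ≤ 0 has a down-step ending ≥ 0. -/
lemma bc_lt_count : ∀ (l : List Bool) (h : ℤ), 1 ≤ h → h + wsum l ≤ 0 →
    bc h l < l.count false
  | [], h, h1, h2 => by simp at h2; omega
  | b :: r, h, h1, h2 => by
    rw [wsum_cons] at h2
    rw [bc_cons, List.count_cons]
    cases b
    · by_cases hh : h = 1
      · subst hh
        have : ¬((false = false) ∧ (1:ℤ) + stepv false < 0) := by simp [stepv]
        rw [if_neg this]
        have hle := bc_le_count (1 + stepv false) r
        have h3 : (if ((false:Bool) == false) = true then 1 else 0) = 1 := rfl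
        omega
      · have h1' : 1 ≤ h + stepv false := by simp [stepv] at *; omega
        have := bc_lt_count r (h + stepv false) h1' (by omega)
        split <;> simp <;> omega
    · have := bc_lt_count r (h + stepv true) (by simp [stepv]; omega) (by omega)
      simp only [if_neg (by simp : ¬((true = false) ∧ h + stepv true < 0))]
      simp
      omega

/-- D : nonpositive characterization forward -/
lemma nonpos_of_bc_full : ∀ (l : List Bool) (h : ℤ), h ≤ 0 → h + wsum l ≤ 0 →
    bc h l = l.count false → ∀ t, h + wsum (l.take t) ≤ 0
  | [], h, h0, _, _, t => by simpa using h0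
  | b :: r, h, h0, hend, hbc, t => by
    rw [wsum_cons] at hend
    rw [bc_cons, List.count_cons] at hbc
    cases b
    · -- step down
      have hlt : h + stepv false < 0 := by simp [stepv]; omega
      have hbc' : bc (h + stepv false) r = r.count false := by
        rw [if_pos ⟨rfl, hlt⟩] at hbc
        simp at hbc
        have := bc_le_count (h + stepv false) r
        omega
      match t with
      | 0 => simpa using h0
      | s + 1 =>
        rw [wsum_take_cons_succ, ← add_assoc]
        exact nonpos_of_bc_full r (h + stepv false) (by omega) (by omega) hbc' s
    · -- step up
      have hbc' : bc (h + stepv true) r = r.count false := by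
        rw [if_neg (by simp)] at hbc
        simpa using hbc
      by_cases hh : h + stepv true ≤ 0
      · match t with
        | 0 => simpa using h0
        | s + 1 =>
          rw [wsum_take_cons_succ, ← add_assoc]
          exact nonpos_of_bc_full r (h + stepv true) hh (by omega) hbc' s
      · exfalso
        have := bc_lt_count r (h + stepv true) (by omega) (by omega)
        omega

/-- F : converse, all prefixes ≤ 0 gives bc = count false -/
lemma bc_full_of_nonpos : ∀ (l : List Bool) (h : ℤ), h ≤ 0 →
    (∀ t, h + wsum (l.take t) ≤ 0) → bc h l = l.count false
  | [], _, _, _ => by simp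
  | b :: r, h, h0, hp => by
    have h1 : h + stepv b ≤ 0 := by
      have := hp 1
      rwa [wsum_take_cons_succ, List.take_zero, wsum_nil, add_zero] at this
    have h2 : ∀ t, (h + stepv b) + wsum (r.take t) ≤ 0 := by
      intro t
      have := hp (t + 1)
      rw [wsum_take_cons_succ] at this
      omega
    rw [bc_cons, List.count_cons, bc_full_of_nonpos r (h + stepv b) h1 h2]
    cases b
    · have : h + stepv false < 0 := by simp [stepv] at *; omega
      rw [if_pos ⟨rfl, this⟩]
      simp [add_comm]
    · rw [if_neg (by simp)]
      simp

@[simp] lemma wsum_map_not (l : List Bool) : wsum (l.map not) = - wsum l := by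
  induction l with
  | nil => simp
  | cons b t ih => cases b <;> simp [ih, stepv] <;> ring

@[simp] lemma map_not_not (l : List Bool) : (l.map not).map not = l := by
  simp [List.map_map, Function.comp_def]

lemma take_map_not (l : List Bool) (t : ℕ) : (l.map not).take t = (l.take t).map not := by
  simp [List.map_take]

lemma count_false_map_not (l : List Bool) : (l.map not).count false = l.count true := by
  induction l with
  | nil => simp
  | cons b t ih => cases b <;> simp [List.count_cons, ih]

/-- split a path with negative total sum at the first passage below 0 -/
lemma exists_split_neg_aux : ∀ (n : ℕ) (l : List Bool), l.length ≤ n → wsum l < 0 →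
    ∃ p q, l = p ++ false :: q ∧ wsum p = 0 ∧ ∀ t, 0 ≤ wsum (p.take t) := by
  intro n
  induction n with
  | zero =>
    intro l hl hw
    interval_cases h : l.length
    · match l with
      | [] => simp at hw
  | succ n ih =>
  intro l hl hw
  match l with
  | [] => simp at hw
  | false :: r =>
    exact ⟨[], r, rfl, rfl, fun t => by simp⟩
  | true :: r =>
    have hr : wsum r < 0 := by
      rw [wsum_cons] at hw; simp [stepv] at hw; omega
    obtain ⟨p1, q1, hre, hp1, hp1n⟩ := ih r (by simp only [List.length_cons] at hl; omega) hr
    have hq1 : wsum q1 < 0 := by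
      have h6 : wsum r = wsum p1 + (stepv false + wsum q1) := by
        rw [hre, wsum_append, wsum_cons]
      rw [hp1] at h6
      have h7 : stepv false = -1 := rfl
      rw [h7] at h6
      have h8 : wsum (true :: r) = stepv true + wsum r := wsum_cons _ _
      have h9 : stepv true = 1 := rfl
      rw [h9] at h8
      omega
    have hlen : q1.length ≤ n := by
      have h5 : r.length = p1.length + 1 + q1.length := by simp [hre]; omega
      simp only [List.length_cons] at hl
      omega
    obtain ⟨p2, q2, hq1e, hp2, hp2n⟩ := ih q1 hlen hq1
    refine ⟨true :: (p1 ++ false :: p2), q2, ?_, ?_, ?_⟩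
    · simp [hre, hq1e]
    · simp [hp1, hp2, stepv]
    · intro t
      match t with
      | 0 => simp
      | s + 1 =>
        rw [wsum_take_cons_succ, wsum_take_append]
        have h1 := hp1n s
        rcases Nat.lt_or_ge s p1.length with hc | hc
        · rw [Nat.sub_eq_zero_of_le (le_of_lt hc)]
          simp [stepv]
          omega
        · rw [List.take_of_length_le hc]
          obtain ⟨u, hu⟩ : ∃ u, s - p1.length = u + 1 ∨ s - p1.length = 0 := ⟨s - p1.length - 1, by omega⟩
          rcases hu with hu | hu
          · rw [hu, wsum_take_cons_succ]
            have h2 := hp2n u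
            simp [stepv] at *
            omega
          · rw [hu]
            simp [stepv]
            omega

lemma exists_split_neg (l : List Bool) (hw : wsum l < 0) :
    ∃ p q, l = p ++ false :: q ∧ wsum p = 0 ∧ ∀ t, 0 ≤ wsum (p.take t) :=
  exists_split_neg_aux l.length l le_rfl hw

/-- split a path with positive total sum at the first passage above 0 -/
lemma exists_split_pos (l : List Bool) (hw : 0 < wsum l) :
    ∃ p q, l = p ++ true :: q ∧ wsum p = 0 ∧ ∀ t, wsum (p.take t) ≤ 0 := by
  obtain ⟨p, q, he, hp, hpn⟩ := exists_split_neg (l.map not) (by simp; omega)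
  refine ⟨p.map not, q.map not, ?_, by simpa using congrArg Neg.neg hp, ?_⟩
  · have := congrArg (List.map not) he
    simpa [List.map_map, Function.comp_def] using this
  · intro t
    have := hpn t
    rw [take_map_not, wsum_map_not]
    omega

/-- uniqueness of splits: false separator version -/
lemma split_unique_false : ∀ (p : List Bool) (p' q q' : List Bool) (h : ℤ),
    (∀ t, 0 ≤ h + wsum (p.take t)) → (∀ t, 0 ≤ h + wsum (p'.take t)) →
    h + wsum p = 0 → h + wsum p' = 0 →
    p ++ false :: q = p' ++ false :: q' → p = p' ∧ q = q'
  | [], [], q, q', h, _, _, _, _, heq => ⟨rfl, by simpa using heq⟩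
  | [], c :: t', q, q', h, hp, hp', hw, hw', heq => by
    exfalso
    have hh : h = 0 := by simpa using hw
    have hc : c = false := by
      have := congrArg (fun l => l.headI) heq
      simpa using this.symm
    have := hp' 1
    rw [wsum_take_cons_succ, hc] at this
    simp [stepv] at this
    omega
  | a :: t, [], q, q', h, hp, hp', hw, hw', heq => by
    exfalso
    have hh : h = 0 := by simpa using hw'
    have hc : a = false := by
      have := congrArg (fun l => l.headI) heq
      simpa using this
    have := hp 1
    rw [wsum_take_cons_succ, hc] at this
    simp [stepv] at this
    omega
  | a :: t, a' :: t', q, q', h, hp, hp', hw, hw', heq => by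
    have ha : a = a' := by
      have := congrArg (fun l => l.headI) heq
      simpa using this
    subst ha
    have heq' : t ++ false :: q = t' ++ false :: q' := by
      simpa using heq
    have h1 : ∀ s, 0 ≤ (h + stepv a) + wsum (t.take s) := by
      intro s
      have := hp (s + 1)
      rw [wsum_take_cons_succ] at this
      omega
    have h1' : ∀ s, 0 ≤ (h + stepv a) + wsum (t'.take s) := by
      intro s
      have := hp' (s + 1)
      rw [wsum_take_cons_succ] at this
      omega
    obtain ⟨he1, he2⟩ := split_unique_false t t' q q' (h + stepv a) h1 h1'
      (by rw [wsum_cons] at hw; omega) (by rw [wsum_cons] at hw'; omega) heq'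
    exact ⟨by rw [he1], he2⟩

/-- uniqueness of splits: true separator version -/
lemma split_unique_true (p p' q q' : List Bool)
    (hp : ∀ t, wsum (p.take t) ≤ 0) (hp' : ∀ t, wsum (p'.take t) ≤ 0)
    (hw : wsum p = 0) (hw' : wsum p' = 0)
    (heq : p ++ true :: q = p' ++ true :: q') : p = p' ∧ q = q' := by
  have heq' : (p.map not) ++ false :: (q.map not) = (p'.map not) ++ false :: (q'.map not) := by
    have := congrArg (List.map not) heq
    simpa using this
  obtain ⟨h1, h2⟩ := split_unique_false (p.map not) (p'.map not) (q.map not) (q'.map not) 0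
    (fun t => by rw [take_map_not, wsum_map_not]; have := hp t; omega)
    (fun t => by rw [take_map_not, wsum_map_not]; have := hp' t; omega)
    (by simp [hw]) (by simp [hw']) heq'
  constructor
  · have := congrArg (List.map not) h1
    simpa [List.map_map, Function.comp_def] using this
  · have := congrArg (List.map not) h2
    simpa [List.map_map, Function.comp_def] using this

lemma bc_pos_comp (p q : List Bool) (hp : wsum p = 0) (hpn : ∀ t, 0 ≤ wsum (p.take t)) :
    bc 0 (true :: (p ++ false :: q)) = bc 0 q := by
  rw [bc_cons, if_neg (by simp)]
  have h1 : (0:ℤ) + stepv true = 1 := rfl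
  rw [h1, bc_append, bc_zero_of_nonneg p 1 (fun t => by have := hpn t; omega), hp, bc_cons]
  have h2 : (1:ℤ) + 0 + stepv false = 0 := rfl
  rw [h2, if_neg (by simp)]
  omega

lemma bc_neg_comp (p q : List Bool) (hp : wsum p = 0) (hpn : ∀ t, wsum (p.take t) ≤ 0) :
    bc 0 (false :: (p ++ true :: q)) = 1 + p.count false + bc 0 q := by
  rw [bc_cons, if_pos ⟨rfl, by norm_num [stepv]⟩]
  have h1 : (0:ℤ) + stepv false = -1 := rfl
  rw [h1, bc_append, bc_full_of_nonpos p (-1) (by norm_num) (fun t => by have := hpn t; omega),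
    hp, bc_cons]
  have h2 : (-1:ℤ) + 0 + stepv true = 0 := rfl
  rw [h2, if_neg (by simp)]
  omega

lemma even_length_of_wsum_zero {p : List Bool} (hp : wsum p = 0) :
    p.length = 2 * p.count false := by
  have h1 := wsum_eq_counts p
  have h2 := count_add_count p
  omega

/-- the sets of paths we count -/
def PS (n i : ℕ) : Type := {l : List Bool // l.length = 2*n ∧ wsum l = 0 ∧ bc 0 l = i}

lemma finite_subtype_length {P : List Bool → Prop} (m : ℕ) (h : ∀ l, P l → l.length = m) :
    Finite {l : List Bool // P l} := by
  apply Finite.of_injective (fun x : {l // P l} => (fun j : Fin m => x.1.getD j true))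
  intro x y hxy
  apply Subtype.ext
  apply List.ext_getElem (by rw [h _ x.2, h _ y.2])
  intro j h1 h2
  have h3 : j < m := by rw [← h _ x.2]; exact h1
  have := congrFun hxy ⟨j, h3⟩
  simpa [List.getD_eq_getElem, h1, h2] using this

instance PS_finite (n i : ℕ) : Finite (PS n i) :=
  finite_subtype_length (2*n) (fun _ hl => hl.1)

lemma nat_card_sigma {m : ℕ} (α : Fin m → Type) [∀ k, Finite (α k)] :
    Nat.card (Σ k, α k) = ∑ k, Nat.card (α k) := by
  letI : ∀ k, Fintype (α k) := fun k => Fintype.ofFinite _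
  simp [Nat.card_eq_fintype_card, Fintype.card_sigma]

def Apred (n i : ℕ) (l : List Bool) : Prop :=
  (l.length = 2*(n+1) ∧ wsum l = 0 ∧ bc 0 l = i) ∧ l.head? = some true
def Bpred (n i : ℕ) (l : List Bool) : Prop :=
  (l.length = 2*(n+1) ∧ wsum l = 0 ∧ bc 0 l = i) ∧ l.head? = some false

def QS (n i k : ℕ) : Type :=
  {q : List Bool // q.length = 2*(n-k) ∧ wsum q = 0 ∧ k + 1 + bc 0 q = i}

instance (n i k : ℕ) : Finite (QS n i k) := finite_subtype_length _ (fun _ h => h.1)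
instance (n i : ℕ) : Finite {l // Apred n i l} :=
  finite_subtype_length (2*(n+1)) (fun _ h => h.1.1)
instance (n i : ℕ) : Finite {l // Bpred n i l} :=
  finite_subtype_length (2*(n+1)) (fun _ h => h.1.1)

lemma stepv_true : stepv true = 1 := rfl
lemma stepv_false : stepv false = -1 := rfl

def posFun (n i : ℕ) (x : Σ k : Fin (n+1), PS k 0 × PS (n-k) i) : {l // Apred n i l} :=
  ⟨true :: (x.2.1.1 ++ false :: x.2.2.1), by
    obtain ⟨k, ⟨p, hp1, hp2, hp3⟩, ⟨q, hq1, hq2, hq3⟩⟩ := x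
    have hk := k.isLt
    refine ⟨⟨?_, ?_, ?_⟩, rfl⟩
    · simp only [List.length_cons, List.length_append, hp1, hq1]
      omega
    · simp only [wsum_cons, wsum_append, stepv_true, stepv_false, hp2, hq2]
      ring
    · rw [bc_pos_comp p q hp2 (fun t => by
        have := nonneg_of_bc_zero p 0 le_rfl hp3 t; omega)]
      exact hq3⟩

lemma posFun_bij (n i : ℕ) : Function.Bijective (posFun n i) := by
  constructor
  · rintro ⟨k, ⟨p, hp1, hp2, hp3⟩, ⟨q, hq1, hq2, hq3⟩⟩ ⟨k', ⟨p', hp1', hp2', hp3'⟩,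
      ⟨q', hq1', hq2', hq3'⟩⟩ hxy
    simp only [posFun, Subtype.mk.injEq, List.cons.injEq, true_and] at hxy
    obtain ⟨hpp, hqq⟩ := split_unique_false p p' q q' 0
      (fun t => by have := nonneg_of_bc_zero p 0 le_rfl hp3 t; omega)
      (fun t => by have := nonneg_of_bc_zero p' 0 le_rfl hp3' t; omega)
      (by omega) (by omega) hxy
    subst hpp; subst hqq
    obtain rfl : k = k' := Fin.ext (by omega)
    rfl
  · rintro ⟨l, ⟨hlen, hw, hbc⟩, hhead⟩
    obtain ⟨m, rfl⟩ : ∃ m, l = true :: m := by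
      match l with
      | [] => simp at hhead
      | true :: m => exact ⟨m, rfl⟩
      | false :: m => simp at hhead
    have hm : wsum m < 0 := by
      rw [wsum_cons, stepv_true] at hw; omega
    obtain ⟨p, q, rfl, hp, hpn⟩ := exists_split_neg m hm
    have hpc := even_length_of_wsum_zero hp
    have hwq : wsum q = 0 := by
      rw [wsum_cons, wsum_append, wsum_cons, stepv_true, stepv_false, hp] at hw
      omega
    have hlq : p.length + 1 + q.length = 2*n + 1 := by
      simp only [List.length_cons, List.length_append] at hlen
      omega
    have hqc := even_length_of_wsum_zero hwq
    set k := p.count false with hkdef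
    have hkn : k ≤ n := by omega
    refine ⟨⟨⟨k, by omega⟩, ⟨p, by show p.length = 2*k; omega, hp, bc_zero_of_nonneg p 0
      (fun t => by have := hpn t; omega)⟩,
      ⟨q, by show q.length = 2*(n-k); omega, hwq, ?_⟩⟩, rfl⟩
    rw [← hbc, bc_pos_comp p q hp hpn]

noncomputable def posEquiv (n i : ℕ) :
    (Σ k : Fin (n+1), PS k 0 × PS (n-k) i) ≃ {l // Apred n i l} :=
  Equiv.ofBijective _ (posFun_bij n i)

def negFun (n i : ℕ) (x : Σ k : Fin (n+1), PS k k × QS n i k) : {l // Bpred n i l} :=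
  ⟨false :: (x.2.1.1 ++ true :: x.2.2.1), by
    obtain ⟨k, ⟨p, hp1, hp2, hp3⟩, ⟨q, hq1, hq2, hq3⟩⟩ := x
    have hk := k.isLt
    have hpc : p.count false = k := count_false_of_balanced hp1 hp2
    have hpn : ∀ t, wsum (p.take t) ≤ 0 := by
      intro t
      have := nonpos_of_bc_full p 0 le_rfl (by omega) (by rw [hp3, hpc]) t
      omega
    refine ⟨⟨?_, ?_, ?_⟩, rfl⟩
    · simp only [List.length_cons, List.length_append, hp1, hq1]
      omega
    · simp only [wsum_cons, wsum_append, stepv_true, stepv_false, hp2, hq2]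
      ring
    · rw [bc_neg_comp p q hp2 hpn, hpc]
      omega⟩

lemma negFun_bij (n i : ℕ) : Function.Bijective (negFun n i) := by
  constructor
  · rintro ⟨k, ⟨p, hp1, hp2, hp3⟩, ⟨q, hq1, hq2, hq3⟩⟩ ⟨k', ⟨p', hp1', hp2', hp3'⟩,
      ⟨q', hq1', hq2', hq3'⟩⟩ hxy
    simp only [negFun, Subtype.mk.injEq, List.cons.injEq, true_and] at hxy
    have hpc : p.count false = k := count_false_of_balanced hp1 hp2
    have hpc' : p'.count false = k' := count_false_of_balanced hp1' hp2'
    obtain ⟨hpp, hqq⟩ := split_unique_true p p' q q'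
      (fun t => by
        have := nonpos_of_bc_full p 0 le_rfl (by omega) (by rw [hp3, hpc]) t; omega)
      (fun t => by
        have := nonpos_of_bc_full p' 0 le_rfl (by omega) (by rw [hp3', hpc']) t; omega)
      hp2 hp2' hxy
    subst hpp; subst hqq
    obtain rfl : k = k' := Fin.ext (by omega)
    rfl
  · rintro ⟨l, ⟨hlen, hw, hbc⟩, hhead⟩
    obtain ⟨m, rfl⟩ : ∃ m, l = false :: m := by
      match l with
      | [] => simp at hhead
      | true :: m => simp at hhead
      | false :: m => exact ⟨m, rfl⟩
    have hm : 0 < wsum m := by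
      rw [wsum_cons, stepv_false] at hw; omega
    obtain ⟨p, q, rfl, hp, hpn⟩ := exists_split_pos m hm
    have hpc := even_length_of_wsum_zero hp
    have hwq : wsum q = 0 := by
      rw [wsum_cons, wsum_append, wsum_cons, stepv_true, stepv_false, hp] at hw
      omega
    have hlq : p.length + 1 + q.length = 2*n + 1 := by
      simp only [List.length_cons, List.length_append] at hlen
      omega
    have hqc := even_length_of_wsum_zero hwq
    set k := p.count false with hkdef
    have hkn : k ≤ n := by omega
    have hbcq : k + 1 + bc 0 q = i := by
      rw [← hbc, bc_neg_comp p q hp hpn]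
      omega
    exact ⟨⟨⟨k, by omega⟩, ⟨p, by show p.length = 2*k; omega, hp,
        by rw [bc_full_of_nonpos p 0 le_rfl (fun t => by have := hpn t; omega)]⟩,
      ⟨q, by show q.length = 2*(n-k); omega, hwq, hbcq⟩⟩, rfl⟩

noncomputable def negEquiv (n i : ℕ) :
    (Σ k : Fin (n+1), PS k k × QS n i k) ≃ {l // Bpred n i l} :=
  Equiv.ofBijective _ (negFun_bij n i)

lemma head_false_of {n : ℕ} {l : List Bool} (hl : l.length = 2*(n+1))
    (h : ¬ l.head? = some true) : l.head? = some false := by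
  match l with
  | [] => simp at hl
  | true :: t => exact absurd rfl h
  | false :: t => rfl

def hsTo (n i : ℕ) (x : PS (n+1) i) : {l // Apred n i l} ⊕ {l // Bpred n i l} :=
  if h : x.1.head? = some true then .inl ⟨x.1, x.2, h⟩
  else .inr ⟨x.1, x.2, head_false_of x.2.1 h⟩

def hsInv (n i : ℕ) (y : {l // Apred n i l} ⊕ {l // Bpred n i l}) : PS (n+1) i :=
  match y with
  | .inl a => ⟨a.1, a.2.1⟩
  | .inr b => ⟨b.1, b.2.1⟩

def headSplit (n i : ℕ) : PS (n+1) i ≃ ({l // Apred n i l} ⊕ {l // Bpred n i l}) where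
  toFun := hsTo n i
  invFun := hsInv n i
  left_inv x := by
    unfold hsTo
    split <;> rfl
  right_inv y := by
    rcases y with a | b
    · show hsTo n i ⟨a.1, a.2.1⟩ = _
      unfold hsTo
      rw [dif_pos a.2.2]
    · show hsTo n i ⟨b.1, b.2.1⟩ = _
      unfold hsTo
      rw [dif_neg (by simp [b.2.2])]

lemma PS_isEmpty {n i : ℕ} (h : n < i) : IsEmpty (PS n i) := by
  constructor
  rintro ⟨l, hl, hw, hbc⟩
  have h1 := bc_le_count 0 l
  have h2 := count_false_of_balanced hl hw
  omega

lemma cardA (n i : ℕ) : Nat.card {l // Apred n i l}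
    = ∑ k : Fin (n+1), Nat.card (PS k 0) * Nat.card (PS (n-k) i) := by
  rw [← Nat.card_congr (posEquiv n i), nat_card_sigma]
  exact Finset.sum_congr rfl (fun k _ => Nat.card_prod _ _)

lemma cardB (n i : ℕ) : Nat.card {l // Bpred n i l}
    = ∑ k : Fin (n+1), Nat.card (PS k k) * Nat.card (QS n i k) := by
  rw [← Nat.card_congr (negEquiv n i), nat_card_sigma]
  exact Finset.sum_congr rfl (fun k _ => Nat.card_prod _ _)

lemma cardQS (n i k : ℕ) :
    Nat.card (QS n i k) = if k + 1 ≤ i then Nat.card (PS (n-k) (i - (k+1))) else 0 := by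
  split
  · next h =>
    refine Nat.card_congr (Equiv.subtypeEquivRight (fun l => ?_))
    constructor <;> rintro ⟨a, b, c⟩ <;> exact ⟨a, b, by omega⟩
  · next h =>
    have : IsEmpty (QS n i k) := ⟨fun x => h (by have := x.2.2.2; omega)⟩
    exact Nat.card_of_isEmpty

lemma PS_card : ∀ n i, Nat.card (PS n i) = if i ≤ n then catalan n else 0 := by
  intro n
  induction n using Nat.strong_induction_on with
  | _ n ih =>
  match n with
  | 0 =>
    intro i
    match i with
    | 0 =>
      have : Unique (PS 0 0) :=
        { default := ⟨[], by refine ⟨by simp, rfl, rfl⟩⟩,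
          uniq := fun x => Subtype.ext (by
            have := x.2.1
            simp only [Nat.mul_zero] at this
            exact List.length_eq_zero_iff.mp this) }
      simp [Nat.card_unique, catalan_zero]
    | j + 1 =>
      have := PS_isEmpty (n := 0) (i := j+1) (by omega)
      rw [Nat.card_of_isEmpty]
      simp
  | m + 1 =>
    intro i
    have ihc : ∀ k, k ≤ m → ∀ j, Nat.card (PS k j) = if j ≤ k then catalan k else 0 :=
      fun k hk j => ih k (by omega) j
    rw [Nat.card_congr (headSplit m i), Nat.card_sum, cardA, cardB]
    have e1 : ∀ k : Fin (m+1), Nat.card (PS k 0) * Nat.card (PS (m-k) i)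
        = if i + k ≤ m then catalan k * catalan (m-k) else 0 := by
      intro k
      have hk := k.isLt
      rw [ihc k (by omega) 0, ihc (m-k) (by omega) i]
      by_cases h : i + (k:ℕ) ≤ m
      · rw [if_pos (by omega), if_pos (by omega), if_pos h]
      · rw [if_pos (by omega), if_neg (by omega), if_neg h, mul_zero]
    have e2 : ∀ k : Fin (m+1), Nat.card (PS k k) * Nat.card (QS m i k)
        = if (k:ℕ) + 1 ≤ i ∧ i ≤ m + 1 then catalan k * catalan (m-k) else 0 := by
      intro k
      have hk := k.isLt
      rw [ihc k (by omega) k, cardQS, if_pos (le_refl (k:ℕ))]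
      by_cases h : (k:ℕ) + 1 ≤ i
      · rw [if_pos h, ihc (m-k) (by omega) (i - ((k:ℕ)+1))]
        by_cases h2 : i ≤ m + 1
        · rw [if_pos (by omega), if_pos ⟨h, h2⟩]
        · rw [if_neg (by omega), if_neg (by tauto), mul_zero]
      · rw [if_neg h, if_neg (by tauto), mul_zero]
    rw [Finset.sum_congr rfl (fun k _ => e1 k), Finset.sum_congr rfl (fun k _ => e2 k)]
    by_cases hi : i ≤ m + 1
    · rw [if_pos hi]
      have r1 : (∑ k : Fin (m+1), if i + (k:ℕ) ≤ m then catalan k * catalan (m-k) else 0)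
          = ∑ k ∈ Finset.range (m+1), if i + k ≤ m then catalan k * catalan (m-k) else 0 :=
        Fin.sum_univ_eq_sum_range
          (fun k => if i + k ≤ m then catalan k * catalan (m-k) else 0) (m+1)
      have r2 : (∑ k : Fin (m+1), if (k:ℕ) + 1 ≤ i ∧ i ≤ m + 1
            then catalan k * catalan (m-k) else 0)
          = ∑ k ∈ Finset.range (m+1), if k + 1 ≤ i ∧ i ≤ m + 1
            then catalan k * catalan (m-k) else 0 :=
        Fin.sum_univ_eq_sum_range
          (fun k => if k + 1 ≤ i ∧ i ≤ m + 1 then catalan k * catalan (m-k) else 0) (m+1)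
      rw [r1, r2]
      have r3 : (∑ k ∈ Finset.range (m+1), if k + 1 ≤ i ∧ i ≤ m + 1
            then catalan k * catalan (m-k) else 0)
          = ∑ k ∈ Finset.range (m+1), if (m-k) + 1 ≤ i ∧ i ≤ m + 1
            then catalan (m-k) * catalan k else 0 := by
        rw [← Finset.sum_range_reflect]
        refine Finset.sum_congr rfl (fun k hk => ?_)
        have hk' := Finset.mem_range.mp hk
        have : m + 1 - 1 - k = m - k := by omega
        rw [this, Nat.sub_sub_self (by omega : k ≤ m)]
      rw [r3, ← Finset.sum_add_distrib]
      have r4 : (∑ k ∈ Finset.range (m+1),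
            ((if i + k ≤ m then catalan k * catalan (m-k) else 0)
            + if (m-k) + 1 ≤ i ∧ i ≤ m + 1 then catalan (m-k) * catalan k else 0))
          = ∑ k ∈ Finset.range (m+1), catalan k * catalan (m-k) := by
        refine Finset.sum_congr rfl (fun k hk => ?_)
        have hk' := Finset.mem_range.mp hk
        by_cases h : i + k ≤ m
        · rw [if_pos h, if_neg (by omega), add_zero]
        · rw [if_neg h, if_pos ⟨by omega, hi⟩, zero_add, mul_comm]
      rw [r4, catalan_succ]
      exact (Fin.sum_univ_eq_sum_range (fun k => catalan k * catalan (m-k)) (m+1)).symm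
    · rw [if_neg hi]
      have z1 : ∀ k : Fin (m+1),
          (if i + (k:ℕ) ≤ m then catalan k * catalan (m-k) else 0) = 0 :=
        fun k => if_neg (by have := k.isLt; omega)
      have z2 : ∀ k : Fin (m+1),
          (if (k:ℕ) + 1 ≤ i ∧ i ≤ m + 1 then catalan k * catalan (m-k) else 0) = 0 :=
        fun k => if_neg (by tauto)
      rw [Finset.sum_congr rfl (fun k _ => z1 k), Finset.sum_congr rfl (fun k _ => z2 k)]
      simp

lemma bc_eq_sum : ∀ (l : List Bool) (h : ℤ), bc h l
    = ∑ j ∈ Finset.range l.length,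
        (if l.getD j true = false ∧ h + wsum (l.take (j+1)) < 0 then 1 else 0)
  | [], h => by simp
  | b :: t, h => by
    rw [bc_cons, List.length_cons, Finset.sum_range_succ', bc_eq_sum t (h + stepv b)]
    have h0 : (if (b :: t).getD 0 true = false ∧ h + wsum ((b :: t).take (0+1)) < 0
        then 1 else 0) = (if b = false ∧ h + stepv b < 0 then 1 else 0) := by
      rw [List.getD_cons_zero]
      have : wsum ((b :: t).take (0+1)) = stepv b := by
        rw [wsum_take_cons_succ]; simp
      rw [this]
    rw [h0, add_comm]
    congr 1
    refine Finset.sum_congr rfl (fun j _ => ?_)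
    rw [List.getD_cons_succ, wsum_take_cons_succ]
    exact if_congr (by constructor <;> rintro ⟨u, v⟩ <;> exact ⟨u, by omega⟩) rfl rfl

lemma wsum_take_eq (l : List Bool) : ∀ (k : ℕ), k ≤ l.length →
    wsum (l.take k) = ∑ t ∈ Finset.range k, stepv (l.getD t true)
  | 0, _ => by simp
  | k + 1, hk => by
    rw [List.take_succ, wsum_append, Finset.sum_range_succ, wsum_take_eq l k (by omega)]
    have hkl : k < l.length := by omega
    rw [List.getElem?_eq_getElem hkl]
    rw [List.getD_eq_getElem _ _ hkl]
    simp [wsum]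

/-- partial sums in Fin-language match wsum of take -/
lemma partial_sum_eq {N : ℕ} (s : Fin N → Bool) (j : Fin N) :
    (∑ m ∈ Finset.univ.filter (fun m : Fin N => m ≤ j), (if s m then (1:ℤ) else -1))
    = wsum ((List.ofFn s).take ((j:ℕ)+1)) := by
  rw [Finset.sum_filter]
  have e1 : ∀ m : Fin N, (if m ≤ j then (if s m then (1:ℤ) else -1) else 0)
      = (fun t => if t ≤ (j:ℕ) then stepv ((List.ofFn s).getD t true) else 0) (m:ℕ) := by
    intro m
    simp only []
    have hm : ((List.ofFn s).getD (m:ℕ) true) = s m := by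
      rw [List.getD_eq_getElem _ _ (by simp [m.isLt]), List.getElem_ofFn]
    rw [hm]
    rfl
  rw [Finset.sum_congr rfl (fun m _ => e1 m),
    Fin.sum_univ_eq_sum_range (fun t => if t ≤ (j:ℕ) then stepv ((List.ofFn s).getD t true) else 0) N]
  rw [← Finset.sum_filter]
  have e2 : (Finset.range N).filter (fun t => t ≤ (j:ℕ)) = Finset.range ((j:ℕ)+1) := by
    ext t
    simp only [Finset.mem_filter, Finset.mem_range]
    have := j.isLt
    omega
  rw [e2, wsum_take_eq (List.ofFn s) ((j:ℕ)+1) (by simp)]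

lemma bc_eq_card {N : ℕ} (s : Fin N → Bool) :
    (Finset.univ.filter (fun j : Fin N => s j = false ∧
      (∑ m ∈ Finset.univ.filter (fun m : Fin N => m ≤ j),
        (if s m then (1:ℤ) else -1)) < 0)).card
    = bc 0 (List.ofFn s) := by
  rw [Finset.card_filter, bc_eq_sum]
  have hlen : (List.ofFn s).length = N := List.length_ofFn (f := s)
  rw [hlen]
  have key : ∀ j : Fin N, (if (s j = false ∧
        (∑ m ∈ Finset.univ.filter (fun m : Fin N => m ≤ j),
          (if s m then (1:ℤ) else -1)) < 0) then 1 else 0)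
      = (fun t => if ((List.ofFn s).getD t true = false ∧
          (0:ℤ) + wsum ((List.ofFn s).take (t+1)) < 0) then 1 else 0) (j:ℕ) := by
    intro j
    simp only []
    have hm : ((List.ofFn s).getD (j:ℕ) true) = s j := by
      rw [List.getD_eq_getElem _ _ (by simp [j.isLt]), List.getElem_ofFn]
    rw [hm, partial_sum_eq s j, zero_add]
  rw [Finset.sum_congr rfl (fun j _ => key j),
    Fin.sum_univ_eq_sum_range (fun t => if ((List.ofFn s).getD t true = false ∧
      (0:ℤ) + wsum ((List.ofFn s).take (t+1)) < 0) then 1 else 0) N]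

lemma wsum_eq_finsum {N : ℕ} (s : Fin N → Bool) :
    (∑ m, (if s m then (1:ℤ) else -1)) = wsum (List.ofFn s) := by
  rw [wsum, List.map_ofFn, List.sum_ofFn]
  rfl

def mainEquivFun (n i : ℕ) (x : {s : Fin (2*n) → Bool //
    (∑ m, (if s m then (1:ℤ) else -1)) = 0 ∧
    (Finset.univ.filter (fun j : Fin (2*n) =>
      s j = false ∧
      (∑ m ∈ Finset.univ.filter (fun m : Fin (2*n) => m ≤ j),
        (if s m then (1:ℤ) else -1)) < 0)).card = i}) : PS n i :=
  ⟨List.ofFn x.1, List.length_ofFn (f := x.1), by rw [← wsum_eq_finsum]; exact x.2.1,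
    by rw [← bc_eq_card]; exact x.2.2⟩

lemma mainEquiv_bij (n i : ℕ) : Function.Bijective (mainEquivFun n i) := by
  constructor
  · intro x y hxy
    apply Subtype.ext
    exact List.ofFn_injective (congrArg Subtype.val hxy)
  · rintro ⟨l, hl, hw, hbc⟩
    have hs : ∀ j : Fin (2*n), (j:ℕ) < l.length := fun j => by rw [hl]; exact j.isLt
    set s : Fin (2*n) → Bool := fun j => l.getD (j:ℕ) true with hsdef
    have hofn : List.ofFn s = l := by
      apply List.ext_getElem (by rw [List.length_ofFn, hl])
      intro t h1 h2
      rw [List.getElem_ofFn]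
      simp only [hsdef]
      rw [List.getD_eq_getElem _ _ h2]
    refine ⟨⟨s, ?_, ?_⟩, ?_⟩
    · rw [wsum_eq_finsum, hofn, hw]
    · rw [bc_eq_card, hofn, hbc]
    · apply Subtype.ext
      exact hofn

end CF

/-- Chung–Feller: the number of ±1 paths of length 2n ending at 0 with exactly i
down steps strictly below the x-axis equals Catalan(n), independently of i ≤ n. -/
theorem stmt7 (n i : ℕ) (hi : i ≤ n) :
    Nat.card {s : Fin (2*n) → Bool //
      (∑ m, (if s m then (1:ℤ) else -1)) = 0 ∧
      (Finset.univ.filter (fun j : Fin (2*n) =>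
        s j = false ∧
        (∑ m ∈ Finset.univ.filter (fun m : Fin (2*n) => m ≤ j),
          (if s m then (1:ℤ) else -1)) < 0)).card = i}
    = catalan n := by
  rw [Nat.card_congr (Equiv.ofBijective _ (CF.mainEquiv_bij n i)), CF.PS_card n i, if_pos hi]
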